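/- Let (S, →, s_init, Bad) be a transition system and let →_1, …, →_k be relations on S with → = ⋃_{i=1}^k →_i. If → is serial (every state of S has at least one →-successor), then every state of the scheduled system that is reachable from (s_init, 0) has at least one →'-successor; i.e., the scheduler transformation introduces no new deadlocks on reachable states. -/
import Mathlib

/-- The transition relation of the scheduled system: states are pairs of a
state of the original system and a mode (`none` = mode 0, `some i` = mode i). -/
def schedStep {S : Type*} {k : ℕ} (rels : Fin k → S → S → Prop) :
    S × Option (Fin k) → S × Option (Fin k) → Prop :=
  fun p q =>
    match p, q with
    | (s, none), (t, some i) => t = s ∧ ∃ u, rels i s u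
    | (s, some i), (t, none) => rels i s t
    | _, _ => False

/-- **The scheduler transformation introduces no new deadlocks.** If
`→ = ⋃ᵢ →ᵢ` is serial, then every state of the scheduled system reachable
from `(s_init, 0)` has at least one successor. -/
theorem scheduler_no_new_deadlocks {S : Type*} {k : ℕ}
    (rels : Fin k → S → S → Prop)
    (step : S → S → Prop) (hstep : ∀ s t, step s t ↔ ∃ i, rels i s t)
    (hserial : ∀ s : S, ∃ t, step s t) (sinit : S) :
    ∀ p : S × Option (Fin k),
      Relation.ReflTransGen (schedStep rels) (sinit, none) p →
      ∃ q, schedStep rels p q := by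
  have hnone : ∀ s : S, ∃ q, schedStep rels (s, none) q := by
    intro s
    obtain ⟨t, ht⟩ := hserial s
    obtain ⟨i, hi⟩ := (hstep s t).mp ht
    exact ⟨(s, some i), rfl, t, hi⟩
  intro p hp
  induction hp with
  | refl => exact hnone sinit
  | @tail a p _ hlast _ =>
    obtain ⟨t, o⟩ := p
    cases o with
    | none => exact hnone t
    | some i =>
      obtain ⟨s, o'⟩ := a
      cases o' with
      | none =>
        obtain ⟨rfl, u, hu⟩ := hlast
        exact ⟨(u, none), hu⟩
      | some j => exact absurd hlast id
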